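/- Let A and B be relational structures over disjoint signatures τ and σ. Then the automorphism group of the wreath product structure A ≀ B equals the wreath product Aut(A) ≀ Aut(B) acting on A × B. In particular, every automorphism w of A ≀ B is of the form (a, b) ↦ (g_{h(b)}(a), h(b)) for some h ∈ Aut(B) and a family (g_c)_{c∈B} of automorphisms of A. -/
import Mathlib


/-- The automorphisms of the wreath product `A ≀ B` of two relational structures
over disjoint signatures are exactly the maps `(a,b) ↦ (g_{h(b)}(a), h(b))` where
`h` is an automorphism of `B` and each `g_c` is an automorphism of `A`. -/
theorem stmt_6 {A B : Type*} {ιτ ισ : Type*} (arτ : ιτ → ℕ) (arσ : ισ → ℕ)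
    (RA : ∀ i, (Fin (arτ i) → A) → Prop) (RB : ∀ i, (Fin (arσ i) → B) → Prop)
    (w : A × B ≃ A × B) :
    ((∀ p q : A × B, (w p).2 = (w q).2 ↔ p.2 = q.2) ∧
     (∀ (i : ιτ) (t : Fin (arτ i) → A × B),
       (((∀ j k, (w (t j)).2 = (w (t k)).2) ∧ RA i (fun j => (w (t j)).1)) ↔
        ((∀ j k, (t j).2 = (t k).2) ∧ RA i (fun j => (t j).1)))) ∧
     (∀ (i : ισ) (t : Fin (arσ i) → A × B),
       (RB i (fun j => (w (t j)).2) ↔ RB i (fun j => (t j).2)))) ↔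
    (∃ (h : B ≃ B) (g : B → A ≃ A),
      (∀ (i : ισ) (t : Fin (arσ i) → B), RB i (fun j => h (t j)) ↔ RB i t) ∧
      (∀ (b : B) (i : ιτ) (t : Fin (arτ i) → A), RA i (fun j => g b (t j)) ↔ RA i t) ∧
      (∀ p : A × B, w p = (g (h p.2) p.1, h p.2))) := by
  constructor
  · rintro ⟨h1, h2, h3⟩
    by_cases hA : Nonempty A
    · obtain ⟨a₀⟩ := hA
      have hsnd : ∀ (a : A) (b : B), (w (a, b)).2 = (w (a₀, b)).2 := fun a b =>
        (h1 (a, b) (a₀, b)).mpr rfl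
      have hinj : Function.Injective (fun b => (w (a₀, b)).2) := by
        intro b b' hb
        exact (h1 (a₀, b) (a₀, b')).mp hb
      have hsurj : Function.Surjective (fun b => (w (a₀, b)).2) := by
        intro c
        refine ⟨(w.symm (a₀, c)).2, ?_⟩
        calc (w (a₀, (w.symm (a₀, c)).2)).2
            = (w (w.symm (a₀, c))).2 := (h1 _ _).mpr rfl
          _ = c := by rw [w.apply_symm_apply]
      let h : B ≃ B := Equiv.ofBijective _ ⟨hinj, hsurj⟩
      have ginj : ∀ c : B, Function.Injective (fun a => (w (a, h.symm c)).1) := by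
        intro c a a' ha
        have h2nd : (w (a, h.symm c)).2 = (w (a', h.symm c)).2 :=
          (hsnd a _).trans (hsnd a' _).symm
        have : w (a, h.symm c) = w (a', h.symm c) := Prod.ext ha h2nd
        have := w.injective this
        exact (Prod.ext_iff.mp this).1
      have gsurj : ∀ c : B, Function.Surjective (fun a => (w (a, h.symm c)).1) := by
        intro c a'
        set b := h.symm c with hb
        set p := w.symm (a', (w (a₀, b)).2) with hp
        have hp2 : p.2 = b := by
          have : (w p).2 = (w (a₀, b)).2 := by rw [hp, w.apply_symm_apply]
          exact (h1 p (a₀, b)).mp this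
        refine ⟨p.1, ?_⟩
        show (w (p.1, b)).1 = a'
        have hpb : ((p.1, b) : A × B) = p := by rw [← hp2]
        rw [hpb]
        show (w p).1 = a'
        rw [hp, w.apply_symm_apply]
      let g : B → A ≃ A := fun c => Equiv.ofBijective _ ⟨ginj c, gsurj c⟩
      refine ⟨h, g, ?_, ?_, ?_⟩
      · intro i t
        exact h3 i (fun j => (a₀, t j))
      · intro b i t
        have H := h2 i (fun j => (t j, h.symm b))
        constructor
        · intro hr
          exact (H.mp ⟨fun j k => (hsnd _ _).trans (hsnd _ _).symm, hr⟩).2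
        · intro hr
          exact (H.mpr ⟨fun j k => rfl, hr⟩).2
      · rintro ⟨a, b⟩
        refine Prod.ext ?_ ?_
        · show (w (a, b)).1 = (w (a, h.symm (h b))).1
          rw [h.symm_apply_apply]
        · exact hsnd a b
    · refine ⟨Equiv.refl B, fun _ => Equiv.refl A, fun i t => Iff.rfl,
        fun b i t => Iff.rfl, fun p => (hA ⟨p.1⟩).elim⟩
  · rintro ⟨h, g, hRB, hRA, hw⟩
    refine ⟨?_, ?_, ?_⟩
    · intro p q
      rw [hw p, hw q]
      exact h.apply_eq_iff_eq
    · intro i t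
      have hseconds : ∀ j, (w (t j)).2 = h (t j).2 := fun j => by rw [hw]
      have hfirst : ∀ j, (w (t j)).1 = g (h (t j).2) (t j).1 := fun j => by rw [hw]
      constructor
      · rintro ⟨hs, hr⟩
        have hs' : ∀ j k, (t j).2 = (t k).2 := fun j k =>
          h.injective (by rw [← hseconds j, ← hseconds k]; exact hs j k)
        refine ⟨hs', ?_⟩
        by_cases hn : Nonempty (Fin (arτ i))
        · obtain ⟨j₀⟩ := hn
          have heq : (fun j => (w (t j)).1) = fun j => g (h (t j₀).2) (t j).1 :=
            funext fun j => by rw [hfirst j, hs' j j₀]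
          rw [heq] at hr
          exact (hRA (h (t j₀).2) i fun j => (t j).1).mp hr
        · have heq : (fun j => (w (t j)).1) = fun j => (t j).1 :=
            funext fun j => (hn ⟨j⟩).elim
          rwa [heq] at hr
      · rintro ⟨hs, hr⟩
        refine ⟨fun j k => by rw [hseconds j, hseconds k, hs j k], ?_⟩
        by_cases hn : Nonempty (Fin (arτ i))
        · obtain ⟨j₀⟩ := hn
          have heq : (fun j => (w (t j)).1) = fun j => g (h (t j₀).2) (t j).1 :=
            funext fun j => by rw [hfirst j, hs j j₀]
          rw [heq]
          exact (hRA (h (t j₀).2) i fun j => (t j).1).mpr hr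
        · have heq : (fun j => (w (t j)).1) = fun j => (t j).1 :=
            funext fun j => (hn ⟨j⟩).elim
          rwa [heq]
    · intro i t
      have heq : (fun j => (w (t j)).2) = fun j => h (t j).2 :=
        funext fun j => by rw [hw]
      rw [heq]
      exact hRB i fun j => (t j).2
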